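/- Let 0 < r₃ < r₁ and let K = {x + iy ∈ ℂ² : |x| ≤ r₁, |y| = r₃}. Then the polynomially convex hull of K is contained in L = {x + iy : |x| ≤ r₁, |y| ≤ r₃, |x|² − |y|² ≤ r₁² − r₃²}. -/

import Mathlib

open Filter Topology MvPolynomial Finset


/-- The polynomially convex hull of a compact set K ⊂ ℂ²:
all points z with |p(z)| ≤ sup_K |p| for every holomorphic polynomial p. -/
noncomputable def polyHull (K : Set (ℂ × ℂ)) : Set (ℂ × ℂ) :=
  {z | ∀ p : MvPolynomial (Fin 2) ℂ,
    ‖MvPolynomial.eval ![z.1, z.2] p‖ ≤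
      sSup ((fun w : ℂ × ℂ => ‖MvPolynomial.eval ![w.1, w.2] p‖) '' K)}

lemma tail_bound {R : ℝ} (a : ℂ) (ha : ‖a‖ ≤ R) (N : ℕ) :
    ‖Complex.exp a - ∑ k ∈ Finset.range N, a ^ k / k.factorial‖ ≤
      ∑' k : ℕ, R ^ (k + N) / (k + N).factorial := by
  have hR0 : 0 ≤ R := (norm_nonneg a).trans ha
  have hsum : HasSum (fun n => a ^ n / n.factorial) (Complex.exp a) := by
    rw [Complex.exp_eq_exp_ℂ]
    exact NormedSpace.expSeries_div_hasSum_exp a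
  have htail : HasSum (fun k : ℕ => a ^ (k + N) / (k + N).factorial)
      (Complex.exp a - ∑ k ∈ Finset.range N, a ^ k / k.factorial) :=
    (hasSum_nat_add_iff' N).mpr hsum
  have hg : Summable (fun k : ℕ => R ^ (k + N) / (k + N).factorial) :=
    (summable_nat_add_iff N).mpr (Real.summable_pow_div_factorial R)
  refine htail.norm_le_of_bounded hg.hasSum fun k => ?_
  rw [norm_div, norm_pow]
  have : ‖((k + N).factorial : ℂ)‖ = ((k + N).factorial : ℝ) := by
    simp
  rw [this]
  gcongr

lemma hull_re_le (K : Set (ℂ × ℂ)) (q : MvPolynomial (Fin 2) ℂ) (R M : ℝ)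
    (hq : ∀ w ∈ K, ‖MvPolynomial.eval ![w.1, w.2] q‖ ≤ R)
    (hM : ∀ w ∈ K, (MvPolynomial.eval ![w.1, w.2] q).re ≤ M)
    {z : ℂ × ℂ} (hz : z ∈ polyHull K) :
    (MvPolynomial.eval ![z.1, z.2] q).re ≤ M := by
  classical
  rcases K.eq_empty_or_nonempty with hK | hK
  · exfalso
    have h1 := hz 1
    rw [hK] at h1
    simp [Real.sSup_empty] at h1
    linarith
  obtain ⟨w0, hw0⟩ := hK
  have hR0 : 0 ≤ R := (norm_nonneg _).trans (hq w0 hw0)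
  set c := MvPolynomial.eval ![z.1, z.2] q with hc
  set T : ℕ → ℝ := fun N => ∑' k : ℕ, R ^ (k + N) / (k + N).factorial with hT
  set t : ℕ → ℝ := fun N => ∑' k : ℕ, ‖c‖ ^ (k + N) / (k + N).factorial with ht
  -- the polynomial partial sums
  have key : ∀ N : ℕ, ‖Complex.exp c‖ ≤ (Real.exp M + T N) + t N := by
    intro N
    set P : MvPolynomial (Fin 2) ℂ :=
      ∑ k ∈ Finset.range N, MvPolynomial.C ((k.factorial : ℂ))⁻¹ * q ^ k with hP
    have hevalP : ∀ v : ℂ × ℂ, MvPolynomial.eval ![v.1, v.2] P =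
        ∑ k ∈ Finset.range N, (MvPolynomial.eval ![v.1, v.2] q) ^ k / k.factorial := by
      intro v
      rw [hP, map_sum]
      refine Finset.sum_congr rfl fun k _ => ?_
      rw [map_mul, map_pow, MvPolynomial.eval_C, div_eq_mul_inv, mul_comm]
    have hsup : sSup ((fun w : ℂ × ℂ =>
        ‖MvPolynomial.eval ![w.1, w.2] P‖) '' K) ≤ Real.exp M + T N := by
      apply Real.sSup_le
      · rintro x ⟨w, hw, rfl⟩
        show ‖MvPolynomial.eval ![w.1, w.2] P‖ ≤ Real.exp M + T N
        rw [hevalP w]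
        set a := MvPolynomial.eval ![w.1, w.2] q
        calc ‖∑ k ∈ Finset.range N, a ^ k / k.factorial‖
            ≤ ‖Complex.exp a‖ +
              ‖Complex.exp a - ∑ k ∈ Finset.range N, a ^ k / k.factorial‖ := by
              have := norm_sub_le (Complex.exp a)
              calc ‖∑ k ∈ Finset.range N, a ^ k / k.factorial‖
                  = ‖Complex.exp a -
                    (Complex.exp a - ∑ k ∈ Finset.range N, a ^ k / k.factorial)‖ := by
                    congr 1; ring
                _ ≤ _ := norm_sub_le _ _
          _ ≤ Real.exp M + T N := by
              gcongr
              · rw [Complex.norm_exp]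
                exact Real.exp_le_exp.mpr (hM w hw)
              · exact tail_bound a (hq w hw) N
      · have h1 : 0 ≤ T N := tsum_nonneg fun k =>
          div_nonneg (pow_nonneg hR0 _) (by positivity)
        linarith [Real.exp_pos M]
    have hz' := (hz P).trans hsup
    rw [hevalP z] at hz'
    calc ‖Complex.exp c‖
        ≤ ‖∑ k ∈ Finset.range N, c ^ k / k.factorial‖ +
          ‖Complex.exp c - ∑ k ∈ Finset.range N, c ^ k / k.factorial‖ := by
          calc ‖Complex.exp c‖
              = ‖(∑ k ∈ Finset.range N, c ^ k / k.factorial) +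
                (Complex.exp c - ∑ k ∈ Finset.range N, c ^ k / k.factorial)‖ := by
                congr 1; ring
            _ ≤ _ := norm_add_le _ _
      _ ≤ (Real.exp M + T N) + t N := by
          gcongr
          exact tail_bound c le_rfl N
  -- take the limit
  have hTlim : Tendsto T atTop (𝓝 0) := by
    rw [hT]; exact tendsto_sum_nat_add fun k => R ^ k / k.factorial
  have htlim : Tendsto t atTop (𝓝 0) := by
    rw [ht]; exact tendsto_sum_nat_add fun k => ‖c‖ ^ k / k.factorial
  have hlim : Tendsto (fun N => (Real.exp M + T N) + t N) atTop (𝓝 (Real.exp M)) := by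
    have h := (((tendsto_const_nhds (x := Real.exp M)).add hTlim).add htlim)
    simpa using h
  have habs : ‖Complex.exp c‖ ≤ Real.exp M :=
    ge_of_tendsto' hlim key
  rw [Complex.norm_exp] at habs
  exact Real.exp_le_exp.mp habs

lemma dir_le {y₁ y₂ r : ℝ} (hr : 0 ≤ r)
    (h : ∀ a b : ℝ, a ^ 2 + b ^ 2 = 1 → a * y₁ + b * y₂ ≤ r) :
    y₁ ^ 2 + y₂ ^ 2 ≤ r ^ 2 := by
  rcases eq_or_lt_of_le (by positivity : (0:ℝ) ≤ y₁ ^ 2 + y₂ ^ 2) with h0 | h0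
  · nlinarith
  · set s := Real.sqrt (y₁ ^ 2 + y₂ ^ 2) with hs
    have hs0 : 0 < s := Real.sqrt_pos.mpr h0
    have hs2 : s ^ 2 = y₁ ^ 2 + y₂ ^ 2 := Real.sq_sqrt (by positivity)
    have hab : (y₁ / s) ^ 2 + (y₂ / s) ^ 2 = 1 := by
      field_simp
      linarith
    have := h (y₁ / s) (y₂ / s) hab
    have hsr : s ≤ r := by
      have : y₁ / s * y₁ + y₂ / s * y₂ = s := by
        field_simp
        linarith
      linarith [h (y₁ / s) (y₂ / s) hab, this]
    nlinarith

/-- For 0 < r₃ < r₁ and K = {|x| ≤ r₁, |y| = r₃}, the polynomial hull of K is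
contained in L = {|x| ≤ r₁, |y| ≤ r₃, |x|² − |y|² ≤ r₁² − r₃²}. -/
theorem stmt_10 (r₁ r₃ : ℝ) (h₃ : 0 < r₃) (h₁₃ : r₃ < r₁) :
    polyHull {z : ℂ × ℂ | z.1.re ^ 2 + z.2.re ^ 2 ≤ r₁ ^ 2 ∧
        z.1.im ^ 2 + z.2.im ^ 2 = r₃ ^ 2} ⊆
      {z : ℂ × ℂ | z.1.re ^ 2 + z.2.re ^ 2 ≤ r₁ ^ 2 ∧
        z.1.im ^ 2 + z.2.im ^ 2 ≤ r₃ ^ 2 ∧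
        (z.1.re ^ 2 + z.2.re ^ 2) - (z.1.im ^ 2 + z.2.im ^ 2) ≤ r₁ ^ 2 - r₃ ^ 2} := by
  intro z hz
  set K : Set (ℂ × ℂ) := {z : ℂ × ℂ | z.1.re ^ 2 + z.2.re ^ 2 ≤ r₁ ^ 2 ∧
      z.1.im ^ 2 + z.2.im ^ 2 = r₃ ^ 2} with hK
  have hre2 : ∀ w : ℂ, (w ^ 2).re = w.re ^ 2 - w.im ^ 2 := fun w => by
    rw [pow_two, Complex.mul_re]; ring
  have habs2 : ∀ w : ℂ, ‖w‖ ^ 2 = w.re ^ 2 + w.im ^ 2 := fun w => by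
    rw [Complex.sq_norm, Complex.normSq_apply]; ring
  -- third inequality
  have h3 : (z.1.re ^ 2 + z.2.re ^ 2) - (z.1.im ^ 2 + z.2.im ^ 2) ≤ r₁ ^ 2 - r₃ ^ 2 := by
    have e3 : ∀ v : ℂ × ℂ, MvPolynomial.eval ![v.1, v.2]
        ((X 0) ^ 2 + (X 1) ^ 2 : MvPolynomial (Fin 2) ℂ) = v.1 ^ 2 + v.2 ^ 2 := by
      intro v; simp
    have key := hull_re_le K ((X 0) ^ 2 + (X 1) ^ 2) (r₁ ^ 2 + r₃ ^ 2) (r₁ ^ 2 - r₃ ^ 2)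
      ?_ ?_ hz
    · rw [e3 z, Complex.add_re, hre2, hre2] at key
      linarith
    · intro w hw
      obtain ⟨hw1, hw2⟩ := hw
      rw [e3 w]
      calc ‖w.1 ^ 2 + w.2 ^ 2‖
          ≤ ‖w.1 ^ 2‖ + ‖w.2 ^ 2‖ := norm_add_le _ _
        _ = ‖w.1‖ ^ 2 + ‖w.2‖ ^ 2 := by rw [norm_pow, norm_pow]
        _ ≤ r₁ ^ 2 + r₃ ^ 2 := by rw [habs2, habs2]; linarith
    · intro w hw
      obtain ⟨hw1, hw2⟩ := hw
      rw [e3 w, Complex.add_re, hre2, hre2]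
      linarith
  -- second inequality
  have h2 : z.1.im ^ 2 + z.2.im ^ 2 ≤ r₃ ^ 2 := by
    apply dir_le h₃.le
    intro a b hab
    have ha1 : |a| ≤ 1 := by
      apply le_of_pow_le_pow_left₀ two_ne_zero zero_le_one
      rw [sq_abs]; nlinarith
    have hb1 : |b| ≤ 1 := by
      apply le_of_pow_le_pow_left₀ two_ne_zero zero_le_one
      rw [sq_abs]; nlinarith
    have e2 : ∀ v : ℂ × ℂ, MvPolynomial.eval ![v.1, v.2]
        (MvPolynomial.C (-Complex.I) * (MvPolynomial.C (a : ℂ) * X 0 +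
          MvPolynomial.C (b : ℂ) * X 1) : MvPolynomial (Fin 2) ℂ) =
        -Complex.I * ((a : ℂ) * v.1 + (b : ℂ) * v.2) := by
      intro v; simp
    have hre : ∀ u : ℂ, (-Complex.I * u).re = u.im := fun u => by
      simp [Complex.mul_re]
    have him : ∀ v₁ v₂ : ℂ, ((a : ℂ) * v₁ + (b : ℂ) * v₂).im = a * v₁.im + b * v₂.im := by
      intro v₁ v₂
      simp [Complex.add_im, Complex.mul_im]
    have habsw : ∀ w : ℂ × ℂ, w ∈ K → ‖w.1‖ ≤ r₁ + r₃ ∧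
        ‖w.2‖ ≤ r₁ + r₃ := by
      intro w hw
      obtain ⟨hw1, hw2⟩ := hw
      constructor <;>
      · apply le_of_pow_le_pow_left₀ two_ne_zero (by linarith)
        rw [habs2]; nlinarith
    have key := hull_re_le K (MvPolynomial.C (-Complex.I) * (MvPolynomial.C (a : ℂ) * X 0 +
        MvPolynomial.C (b : ℂ) * X 1)) (2 * (r₁ + r₃)) r₃ ?_ ?_ hz
    · rw [e2 z, hre, him] at key
      exact key
    · intro w hw
      obtain ⟨hc1, hc2⟩ := habsw w hw
      rw [e2 w, norm_mul]
      have hI : ‖-Complex.I‖ = 1 := by simp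
      rw [hI, one_mul]
      calc ‖(a : ℂ) * w.1 + (b : ℂ) * w.2‖
          ≤ ‖(a : ℂ) * w.1‖ + ‖(b : ℂ) * w.2‖ :=
            norm_add_le _ _
        _ = |a| * ‖w.1‖ + |b| * ‖w.2‖ := by
            rw [norm_mul, norm_mul, Complex.norm_real, Complex.norm_real, Real.norm_eq_abs, Real.norm_eq_abs]
        _ ≤ 1 * (r₁ + r₃) + 1 * (r₁ + r₃) := by
            gcongr
        _ = 2 * (r₁ + r₃) := by ring
    · intro w hw
      obtain ⟨hw1, hw2⟩ := hw
      rw [e2 w, hre, him]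
      nlinarith [sq_nonneg (a * w.2.im - b * w.1.im), sq_nonneg (a * w.1.im + b * w.2.im - r₃),
        sq_nonneg (a * w.1.im + b * w.2.im + r₃)]
  exact ⟨by linarith, h2, h3⟩
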